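/- arXiv:2312.16928 — 5 statements merged into one kernel-verified Lean document; each statement's English description precedes it below -/
import Mathlib

section
/- Let ω ∈ C^1([0, η]) be nonnegative nonincreasing, and v ∈ L^1(ℝ) ∩ L^∞(ℝ) continuous. With V(x) = ∫_x^{x+η} ω(y - x) v(y) dy, the derivative V' satisfies ∫_ℝ |V'(x)| dx ≤ 3 ‖v‖_{L^1} ‖ω‖_{L^∞}; hence V has bounded variation. -/
open MeasureTheory

/-- The derivative of the one-sided nonlocal average has `L¹` norm at most
`3 ‖v‖_{L¹} ‖ω‖_{L^∞}`; hence the nonlocal average has bounded variation. -/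
theorem conv_deriv_L1_bound (η Mω : ℝ) (hη : 0 < η) (ω ω' v : ℝ → ℝ)
    (hω_deriv : ∀ t ∈ Set.Icc 0 η, HasDerivAt ω (ω' t) t)
    (hω'_cont : ContinuousOn ω' (Set.Icc 0 η))
    (hω_nonneg : ∀ t ∈ Set.Icc 0 η, 0 ≤ ω t)
    (hω_mono : ∀ s ∈ Set.Icc 0 η, ∀ t ∈ Set.Icc 0 η, s ≤ t → ω t ≤ ω s)
    (hv_cont : Continuous v) (hv_int : Integrable v)
    (hv_bdd : ∃ Mv, ∀ x, |v x| ≤ Mv)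
    (hω_bdd : ∀ t ∈ Set.Icc 0 η, |ω t| ≤ Mω) :
    (∫ x, |(∫ z in x..(x + η), v z * ω' (z - x)) + v (x + η) * ω η - v x * ω 0|) ≤
      3 * (∫ z, |v z|) * Mω := by
  have hMω0 : 0 ≤ Mω := (abs_nonneg _).trans (hω_bdd 0 ⟨le_refl 0, hη.le⟩)
  -- ω' is nonpositive on [0, η]
  have hω'_nonpos : ∀ t ∈ Set.Icc 0 η, ω' t ≤ 0 := by
    intro t ht
    rcases lt_or_eq_of_le ht.2 with h | h
    · have hd := hasDerivAt_iff_tendsto_slope.mp (hω_deriv t ht)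
      have hs : Filter.Tendsto (slope ω t) (nhdsWithin t (Set.Ioi t)) (nhds (ω' t)) :=
        hd.mono_left (nhdsWithin_mono _ (fun x hx => ne_of_gt hx))
      refine le_of_tendsto hs ?_
      filter_upwards [Ioo_mem_nhdsGT_of_mem ⟨le_refl t, h⟩] with x hx
      have hxI : x ∈ Set.Icc 0 η := ⟨ht.1.trans hx.1.le, hx.2.le⟩
      have hωle : ω x ≤ ω t := hω_mono t ht x hxI hx.1.le
      rw [slope_def_field]
      exact div_nonpos_of_nonpos_of_nonneg (by linarith) (by linarith [hx.1])
    · have hd := hasDerivAt_iff_tendsto_slope.mp (hω_deriv t ht)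
      have hs : Filter.Tendsto (slope ω t) (nhdsWithin t (Set.Iio t)) (nhds (ω' t)) :=
        hd.mono_left (nhdsWithin_mono _ (fun x hx => ne_of_lt hx))
      refine le_of_tendsto hs ?_
      filter_upwards [Ioo_mem_nhdsLT_of_mem ⟨h ▸ hη, le_refl t⟩] with x hx
      have hxI : x ∈ Set.Icc 0 η := ⟨hx.1.le, h ▸ hx.2.le⟩
      have hωle : ω t ≤ ω x := hω_mono x hxI t ht hx.2.le
      rw [slope_def_field]
      exact div_nonpos_of_nonneg_of_nonpos (by linarith) (by linarith [hx.2])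
  -- a continuous extension of ω' to all of ℝ
  set c : ℝ → ℝ := fun t => ω' (min (max t 0) η) with hc
  have hproj : ∀ t : ℝ, min (max t 0) η ∈ Set.Icc 0 η := by
    intro t
    constructor
    · exact le_min (le_max_right _ _) hη.le
    · exact min_le_right _ _
  have hc_cont : Continuous c :=
    hω'_cont.comp_continuous (by continuity) hproj
  have hc_eq : ∀ t ∈ Set.Icc 0 η, c t = ω' t := by
    intro t ht
    simp only [hc]
    rw [max_eq_left ht.1, min_eq_left ht.2]
  have hc_nonpos : ∀ t, c t ≤ 0 := fun t => hω'_nonpos _ (hproj t)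
  -- FTC: ∫_0^η |c| = ω 0 - ω η ≤ Mω
  have hFTC : (∫ t in (0:ℝ)..η, ω' t) = ω η - ω 0 := by
    apply intervalIntegral.integral_eq_sub_of_hasDerivAt
    · intro t ht
      exact hω_deriv t (by rwa [Set.uIcc_of_le hη.le] at ht)
    · exact (hω'_cont.mono (by rw [Set.uIcc_of_le hη.le])).intervalIntegrable
  have hcInt : IntervalIntegrable c volume 0 η := hc_cont.intervalIntegrable _ _
  have hI1 : (∫ t in (0:ℝ)..η, |c t|) = ω 0 - ω η := by
    have h1 : (∫ t in (0:ℝ)..η, |c t|) = ∫ t in (0:ℝ)..η, -ω' t := by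
      apply intervalIntegral.integral_congr
      intro t ht
      rw [Set.uIcc_of_le hη.le] at ht
      show |c t| = -ω' t
      rw [hc_eq t ht, abs_of_nonpos (hω'_nonpos t ht)]
    rw [h1, intervalIntegral.integral_neg, hFTC]
    ring
  have hI1_le : (∫ t in (0:ℝ)..η, |c t|) ≤ Mω := by
    rw [hI1]
    have h0 : ω 0 ≤ Mω := (le_abs_self _).trans (hω_bdd 0 ⟨le_refl 0, hη.le⟩)
    have hη0 : 0 ≤ ω η := hω_nonneg η ⟨hη.le, le_refl η⟩
    linarith
  -- notation
  set I : ℝ := ∫ z, |v z| with hIdef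
  have hI_nonneg : 0 ≤ I := integral_nonneg (fun z => abs_nonneg _)
  have htrans_int : ∀ t : ℝ, Integrable (fun x => |v (t + x)|) := fun t =>
    (hv_int.comp_add_left t).abs
  have htrans_val : ∀ t : ℝ, (∫ x, |v (t + x)|) = I := fun t =>
    integral_add_left_eq_self (fun z => |v z|) t
  set ν : Measure ℝ := volume.restrict (Set.Ioc (0:ℝ) η) with hν
  have hinner : ∀ t, (∫ x, |v (t + x)| * |c t|) = I * |c t| := by
    intro t
    rw [integral_mul_const, htrans_val t, mul_comm]
  -- Fubini
  have hH_int : Integrable (fun p : ℝ × ℝ => |v (p.2 + p.1)| * |c p.2|) (volume.prod ν) := by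
    have hmeas : AEStronglyMeasurable (fun p : ℝ × ℝ => |v (p.2 + p.1)| * |c p.2|)
        (volume.prod ν) := by
      apply Continuous.aestronglyMeasurable
      exact ((hv_cont.comp (continuous_snd.add continuous_fst)).abs).mul
        ((hc_cont.comp continuous_snd).abs)
    rw [integrable_prod_iff' hmeas]
    constructor
    · exact Filter.Eventually.of_forall (fun t => by simpa using (htrans_int t).mul_const |c t|)
    · have hbig : Integrable (fun t => I * |c t|) ν := by
        apply Continuous.integrableOn_Ioc
        exact continuous_const.mul hc_cont.abs
      apply hbig.congr
      refine Filter.Eventually.of_forall (fun t => ?_)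
      have heq : (∫ x, ‖|v (t + x)| * |c t|‖) = ∫ x, |v (t + x)| * |c t| := by
        congr 1
        funext x
        rw [Real.norm_eq_abs, abs_of_nonneg (mul_nonneg (abs_nonneg _) (abs_nonneg _))]
      show I * |c t| = ∫ x, ‖|v (t + x)| * |c t|‖
      rw [heq, hinner t]
  have hG_int : Integrable (fun x => ∫ t, |v (t + x)| * |c t| ∂ν) := hH_int.integral_prod_left
  have hG_le : (∫ x, ∫ t, |v (t + x)| * |c t| ∂ν) ≤ I * Mω := by
    have hswap := integral_integral_swap
      (f := fun (x : ℝ) (t : ℝ) => |v (t + x)| * |c t|) (μ := volume) (ν := ν) hH_int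
    rw [hswap]
    have : (∫ t, (∫ x, |v (t + x)| * |c t|) ∂ν) = ∫ t, I * |c t| ∂ν := by
      congr 1
      funext t
      rw [hinner t]
    rw [this, integral_const_mul]
    have : (∫ t, |c t| ∂ν) = ∫ t in (0:ℝ)..η, |c t| := by
      rw [intervalIntegral.integral_of_le hη.le]
    rw [this]
    exact mul_le_mul_of_nonneg_left hI1_le hI_nonneg
  -- the dominating function
  set g : ℝ → ℝ := fun x => (∫ t, |v (t + x)| * |c t| ∂ν) + |v (x + η)| * Mω + |v x| * Mω
    with hg
  have hg_int : Integrable g :=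
    (hG_int.add (((hv_int.comp_add_right η).abs).mul_const Mω)).add ((hv_int.abs).mul_const Mω)
  -- pointwise bound
  have hpoint : ∀ x, |(∫ z in x..(x + η), v z * ω' (z - x)) + v (x + η) * ω η - v x * ω 0|
      ≤ g x := by
    intro x
    have hxle : x ≤ x + η := by linarith
    have hxc : (∫ z in x..(x + η), v z * ω' (z - x)) = ∫ z in x..(x + η), v z * c (z - x) := by
      apply intervalIntegral.integral_congr
      intro z hz
      rw [Set.uIcc_of_le hxle] at hz
      show v z * ω' (z - x) = v z * c (z - x)
      rw [hc_eq (z - x) ⟨by linarith [hz.1], by linarith [hz.2]⟩]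
    have h1 : |∫ z in x..(x + η), v z * c (z - x)| ≤ ∫ z in x..(x + η), |v z * c (z - x)| :=
      intervalIntegral.abs_integral_le_integral_abs hxle
    have h2 : (∫ t in (0:ℝ)..η, |v (t + x)| * |c t|) = ∫ z in x..(x + η), |v z * c (z - x)| := by
      have e1 : (∫ t in (0:ℝ)..η, |v (t + x)| * |c t|)
          = ∫ t in (0:ℝ)..η, (fun z => |v z * c (z - x)|) (t + x) := by
        apply intervalIntegral.integral_congr
        intro t ht
        simp [abs_mul]
      rw [e1, intervalIntegral.integral_comp_add_right (fun z => |v z * c (z - x)|) x,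
        zero_add, add_comm η x]
    have h3 : (∫ t in (0:ℝ)..η, |v (t + x)| * |c t|) = ∫ t, |v (t + x)| * |c t| ∂ν := by
      rw [intervalIntegral.integral_of_le hη.le]
    have hA : |v (x + η) * ω η| ≤ |v (x + η)| * Mω := by
      rw [abs_mul]
      exact mul_le_mul_of_nonneg_left (hω_bdd η ⟨hη.le, le_refl η⟩) (abs_nonneg _)
    have hB : |v x * ω 0| ≤ |v x| * Mω := by
      rw [abs_mul]
      exact mul_le_mul_of_nonneg_left (hω_bdd 0 ⟨le_refl 0, hη.le⟩) (abs_nonneg _)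
    have htri : |(∫ z in x..(x + η), v z * ω' (z - x)) + v (x + η) * ω η - v x * ω 0|
        ≤ |∫ z in x..(x + η), v z * c (z - x)| + |v (x + η) * ω η| + |v x * ω 0| := by
      rw [hxc]
      calc |(∫ z in x..(x + η), v z * c (z - x)) + v (x + η) * ω η - v x * ω 0|
          ≤ |(∫ z in x..(x + η), v z * c (z - x)) + v (x + η) * ω η| + |v x * ω 0| :=
            abs_sub _ _
        _ ≤ |∫ z in x..(x + η), v z * c (z - x)| + |v (x + η) * ω η| + |v x * ω 0| := by
            gcongr
            exact abs_add_le _ _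
    have : |∫ z in x..(x + η), v z * c (z - x)| ≤ ∫ t, |v (t + x)| * |c t| ∂ν := by
      rw [← h3]
      rw [h2]
      exact h1
    simp only [hg]
    linarith
  -- conclude
  have hmain : (∫ x, |(∫ z in x..(x + η), v z * ω' (z - x)) + v (x + η) * ω η - v x * ω 0|)
      ≤ ∫ x, g x :=
    integral_mono_of_nonneg (Filter.Eventually.of_forall (fun x => abs_nonneg _)) hg_int
      (Filter.Eventually.of_forall hpoint)
  have hgval : (∫ x, g x) ≤ 3 * I * Mω := by
    have hA' : Integrable (fun x => |v (x + η)| * Mω) :=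
      ((hv_int.comp_add_right η).abs).mul_const Mω
    have hB' : Integrable (fun x => |v x| * Mω) := (hv_int.abs).mul_const Mω
    have hAB : Integrable (fun x => (∫ t, |v (t + x)| * |c t| ∂ν) + |v (x + η)| * Mω) :=
      hG_int.add hA'
    have e1 : (∫ x, (((∫ t, |v (t + x)| * |c t| ∂ν) + |v (x + η)| * Mω) + |v x| * Mω))
        = (∫ x, ((∫ t, |v (t + x)| * |c t| ∂ν) + |v (x + η)| * Mω)) + ∫ x, |v x| * Mω :=
      integral_add hAB hB'
    have e2 : (∫ x, ((∫ t, |v (t + x)| * |c t| ∂ν) + |v (x + η)| * Mω))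
        = (∫ x, ∫ t, |v (t + x)| * |c t| ∂ν) + ∫ x, |v (x + η)| * Mω :=
      integral_add hG_int hA'
    have hsplit : (∫ x, g x) = (∫ x, ∫ t, |v (t + x)| * |c t| ∂ν)
        + (∫ x, |v (x + η)| * Mω) + (∫ x, |v x| * Mω) := by
      simp only [hg]
      rw [e1, e2]
    have hv1 : (∫ x, |v (x + η)| * Mω) = I * Mω := by
      rw [integral_mul_const]
      congr 1
      exact integral_add_right_eq_self (fun z => |v z|) η
    have hv2 : (∫ x, |v x| * Mω) = I * Mω := by
      rw [integral_mul_const]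
    rw [hsplit, hv1, hv2]
    linarith
  calc (∫ x, |(∫ z in x..(x + η), v z * ω' (z - x)) + v (x + η) * ω η - v x * ω 0|)
      ≤ ∫ x, g x := hmain
    _ ≤ 3 * I * Mω := hgval
end

section
/- Let ω : [0, η] → ℝ be nonnegative and nonincreasing, extended by zero outside [0, η]. For a space step Δx with η = N_η Δx, define ζ_{p+1/2} = ∫_{pΔx}^{(p+1)Δx} ω(y) dy for p = 0, ..., N_η - 1, and given a sequence (u_i) with 0 ≤ u_i ≤ 1, define c_{i+1/2} = Σ_{p=0}^{N_η-1} ζ_{p+1/2} u_{i+p+1}. Then for every i, |c_{i+1/2} - c_{i-1/2}| ≤ ζ_{1/2} ≤ ω(0) Δx. -/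
open MeasureTheory

/-- Discrete nonlocal averages: `|c_{i+1/2} - c_{i-1/2}| ≤ ζ_{1/2} ≤ ω(0) Δx`. -/
theorem discrete_average_diff_bound (η Δx : ℝ) (Nη : ℕ) (hNη : 0 < Nη) (hη : 0 < η)
    (hΔx : Δx = η / Nη)
    (ω : ℝ → ℝ) (hω_nonneg : ∀ t ∈ Set.Icc 0 η, 0 ≤ ω t)
    (hω_mono : ∀ s ∈ Set.Icc 0 η, ∀ t ∈ Set.Icc 0 η, s ≤ t → ω t ≤ ω s)
    (u : ℤ → ℝ) (hu : ∀ i, u i ∈ Set.Icc (0 : ℝ) 1)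
    (ζ : ℕ → ℝ) (hζ : ∀ p, ζ p = ∫ y in ((p : ℝ) * Δx)..(((p : ℝ) + 1) * Δx), ω y)
    (c : ℤ → ℝ) (hc : ∀ i, c i = ∑ p ∈ Finset.range Nη, ζ p * u (i + (p : ℤ) + 1)) :
    ∀ i : ℤ, |c i - c (i - 1)| ≤ ζ 0 ∧ ζ 0 ≤ ω 0 * Δx := by
  have hNpos : (0:ℝ) < (Nη:ℝ) := by exact_mod_cast hNη
  have hΔpos : 0 < Δx := by rw [hΔx]; positivity
  have hNΔ : (Nη:ℝ) * Δx = η := by rw [hΔx]; field_simp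
  have hsub : ∀ p : ℕ, p < Nη → Set.Icc ((p:ℝ)*Δx) (((p:ℝ)+1)*Δx) ⊆ Set.Icc 0 η := by
    intro p hp x hx
    have h1 : ((p:ℝ)+1) ≤ (Nη:ℝ) := by exact_mod_cast hp
    have h2 : (0:ℝ) ≤ (p:ℝ)*Δx := by positivity
    have h3 : ((p:ℝ)+1)*Δx ≤ η := by nlinarith
    exact ⟨le_trans h2 hx.1, le_trans hx.2 h3⟩
  have hintg : ∀ a b : ℝ, a ≤ b → 0 ≤ a → b ≤ η → IntervalIntegrable ω volume a b := by
    intro a b hab ha hb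
    apply AntitoneOn.intervalIntegrable
    intro x hx y hy hxy
    rw [Set.uIcc_of_le hab] at hx hy
    exact hω_mono x ⟨le_trans ha hx.1, le_trans hx.2 hb⟩ y ⟨le_trans ha hy.1, le_trans hy.2 hb⟩ hxy
  have hζnn : ∀ p : ℕ, p < Nη → 0 ≤ ζ p := by
    intro p hp
    rw [hζ]
    apply intervalIntegral.integral_nonneg (by nlinarith [hΔpos, (Nat.cast_nonneg p : (0:ℝ) ≤ p)] : (p:ℝ)*Δx ≤ ((p:ℝ)+1)*Δx)
    intro x hx
    exact hω_nonneg x (hsub p hp hx)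
  have hζmono : ∀ p : ℕ, p + 1 < Nη → ζ (p+1) ≤ ζ p := by
    intro p hp
    have hpN : ((p:ℝ)+2) ≤ (Nη:ℝ) := by exact_mod_cast hp
    have hab : (p:ℝ)*Δx ≤ ((p:ℝ)+1)*Δx := by nlinarith [(Nat.cast_nonneg p : (0:ℝ) ≤ p)]
    have h1 : ζ (p+1) = ∫ y in ((p:ℝ)*Δx)..(((p:ℝ)+1)*Δx), ω (y + Δx) := by
      rw [hζ, intervalIntegral.integral_comp_add_right]
      push_cast
      ring_nf
    rw [h1, hζ]
    apply intervalIntegral.integral_mono_on hab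
    · -- integrability of ω (· + Δx)
      apply AntitoneOn.intervalIntegrable
      intro x hx y hy hxy
      rw [Set.uIcc_of_le hab] at hx hy
      have hx1 : 0 ≤ x + Δx := by nlinarith [hx.1, (Nat.cast_nonneg p : (0:ℝ) ≤ p)]
      have hx2 : x + Δx ≤ η := by nlinarith [hx.2]
      have hy1 : 0 ≤ y + Δx := by nlinarith [hy.1, (Nat.cast_nonneg p : (0:ℝ) ≤ p)]
      have hy2 : y + Δx ≤ η := by nlinarith [hy.2]
      exact hω_mono (x+Δx) ⟨hx1, hx2⟩ (y+Δx) ⟨hy1, hy2⟩ (by linarith)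
    · apply hintg _ _ hab (by positivity) (by nlinarith)
    · intro x hx
      have hx0 : 0 ≤ x := le_trans (by positivity) hx.1
      have hxη : x ≤ η := by nlinarith [hx.2]
      have hx2 : x + Δx ≤ η := by nlinarith [hx.2]
      exact hω_mono x ⟨hx0, hxη⟩ (x+Δx) ⟨by linarith, hx2⟩ (by linarith)
  have hΔη : Δx ≤ η := by
    rw [hΔx]
    apply div_le_self hη.le
    exact_mod_cast hNη
  have hζ0le : ζ 0 ≤ ω 0 * Δx := by
    have h0 : ζ 0 = ∫ y in (0:ℝ)..Δx, ω y := by rw [hζ]; norm_num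
    rw [h0]
    have hmono : ∫ y in (0:ℝ)..Δx, ω y ≤ ∫ y in (0:ℝ)..Δx, ω 0 := by
      apply intervalIntegral.integral_mono_on hΔpos.le
        (hintg 0 Δx hΔpos.le le_rfl hΔη) intervalIntegrable_const
      intro x hx
      exact hω_mono 0 ⟨le_rfl, hη.le⟩ x ⟨hx.1, le_trans hx.2 hΔη⟩ hx.1
    have hc' : ∫ y in (0:ℝ)..Δx, ω 0 = Δx * ω 0 := by
      simp [intervalIntegral.integral_const]
    rw [hc'] at hmono
    linarith [hmono]
  intro i
  refine ⟨?_, hζ0le⟩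
  have hDi : c i - c (i-1) = ∑ p ∈ Finset.range Nη, ζ p * (u (i + (p:ℤ) + 1) - u (i + (p:ℤ))) := by
    rw [hc, hc, ← Finset.sum_sub_distrib]
    apply Finset.sum_congr rfl
    intro p _
    have e : i - 1 + (p:ℤ) + 1 = i + (p:ℤ) := by ring
    rw [e]; ring
  have key : ∀ k : ℕ, k < Nη →
      ζ k * u (i + (k:ℤ) + 1) - ζ 0 * u i ≤
        ∑ p ∈ Finset.range (k+1), ζ p * (u (i + (p:ℤ) + 1) - u (i + (p:ℤ))) ∧
      ∑ p ∈ Finset.range (k+1), ζ p * (u (i + (p:ℤ) + 1) - u (i + (p:ℤ))) ≤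
        ζ 0 - ζ k + ζ k * u (i + (k:ℤ) + 1) - ζ 0 * u i := by
    intro k
    induction k with
    | zero =>
      intro _
      simp only [zero_add, Finset.sum_range_one, Nat.cast_zero, add_zero]
      constructor <;> nlinarith
    | succ k ih =>
      intro hk
      have hk' : k < Nη := by omega
      obtain ⟨h1, h2⟩ := ih hk'
      rw [Finset.sum_range_succ]
      have hmon := hζmono k hk
      have hnn := hζnn (k+1) hk
      have hnn' := hζnn k hk'
      have hu1 := hu (i + (k:ℤ) + 1)
      have hu2 := hu (i + ((k:ℤ)+1) + 1)
      have e1 : i + ((k+1:ℕ):ℤ) + 1 = i + ((k:ℤ)+1) + 1 := by push_cast; ring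
      have e2 : i + ((k+1:ℕ):ℤ) = i + (k:ℤ) + 1 := by push_cast; ring
      rw [e1, e2]
      constructor
      · nlinarith [mul_nonneg (sub_nonneg.2 hmon) hu1.1]
      · nlinarith [mul_nonneg (sub_nonneg.2 hmon) (by linarith [hu1.2] : (0:ℝ) ≤ 1 - u (i + (k:ℤ) + 1))]
  obtain ⟨h1, h2⟩ := key (Nη - 1) (by omega)
  have hrange : Nη - 1 + 1 = Nη := by omega
  rw [hrange] at h1 h2
  rw [hDi, abs_le]
  have hm := hζnn (Nη - 1) (by omega)
  have h0 := hζnn 0 hNη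
  have hui := hu i
  have huN := hu (i + ((Nη - 1 : ℕ):ℤ) + 1)
  constructor
  · nlinarith [mul_nonneg hm huN.1, mul_nonneg h0 hui.1,
      mul_nonneg h0 (by linarith [hui.2] : (0:ℝ) ≤ 1 - u i)]
  · nlinarith [mul_nonneg hm (by linarith [huN.2] : (0:ℝ) ≤ 1 - u (i + ((Nη - 1 : ℕ):ℤ) + 1)),
      mul_nonneg h0 hui.1]
end

section
/- With the notation of the discrete nonlocal averages (ζ_{p+1/2}, c_{i+1/2} as above), if additionally Σ_i |u_{i+1} - u_i| < ∞, then Σ_{i ∈ ℤ} |c_{i-1/2} - 2 c_{i+1/2} + c_{i+3/2}| ≤ 2 ζ_{1/2} Σ_{i ∈ ℤ} |u_{i+1} - u_i| ≤ 2 ω(0) Δx Σ_{i ∈ ℤ} |u_{i+1} - u_i|. -/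
open MeasureTheory

private def shiftEquivZ (p : ℤ) : ℤ ≃ ℤ :=
  ⟨fun i => i + p, fun i => i - p, fun i => by ring, fun i => by ring⟩

set_option maxHeartbeats 1000000 in
/-- Second differences of the discrete nonlocal averages are controlled by the
discrete total variation of `u`:
`Σ_i |c_{i-1/2} - 2 c_{i+1/2} + c_{i+3/2}| ≤ 2 ζ_{1/2} Σ_i |u_{i+1}-u_i| ≤ 2 ω(0) Δx Σ_i |u_{i+1}-u_i|`. -/
theorem discrete_second_difference_bound (η Δx : ℝ) (Nη : ℕ) (hNη : 0 < Nη) (hη : 0 < η)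
    (hΔx : Δx = η / Nη)
    (ω : ℝ → ℝ) (hω_nonneg : ∀ t ∈ Set.Icc 0 η, 0 ≤ ω t)
    (hω_mono : ∀ s ∈ Set.Icc 0 η, ∀ t ∈ Set.Icc 0 η, s ≤ t → ω t ≤ ω s)
    (u : ℤ → ℝ) (hu : ∀ i, u i ∈ Set.Icc (0 : ℝ) 1)
    (hTV : Summable (fun i : ℤ => |u (i + 1) - u i|))
    (ζ : ℕ → ℝ) (hζ : ∀ p, ζ p = ∫ y in ((p : ℝ) * Δx)..(((p : ℝ) + 1) * Δx), ω y)
    (c : ℤ → ℝ) (hc : ∀ i, c i = ∑ p ∈ Finset.range Nη, ζ p * u (i + (p : ℤ) + 1)) :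
    (∑' i : ℤ, |c (i - 1) - 2 * c i + c (i + 1)|) ≤
        2 * ζ 0 * ∑' i : ℤ, |u (i + 1) - u i| ∧
    2 * ζ 0 * (∑' i : ℤ, |u (i + 1) - u i|) ≤
        2 * ω 0 * Δx * ∑' i : ℤ, |u (i + 1) - u i| := by
  have hNηR : (1 : ℝ) ≤ (Nη : ℝ) := by exact_mod_cast hNη
  have hΔx_pos : 0 < Δx := by rw [hΔx]; positivity
  set d : ℤ → ℝ := fun i => u (i + 1) - u i with hd
  set T : ℝ := ∑' i : ℤ, |u (i + 1) - u i| with hT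
  have hTV' : Summable (fun i : ℤ => |d i|) := hTV
  have hT_nonneg : 0 ≤ T := tsum_nonneg fun i => abs_nonneg _
  -- subinterval inclusion
  have hsub : ∀ p : ℕ, p < Nη → Set.Icc ((p : ℝ) * Δx) (((p : ℝ) + 1) * Δx) ⊆ Set.Icc 0 η := by
    intro p hp
    apply Set.Icc_subset_Icc
    · positivity
    · have hp1 : ((p : ℝ) + 1) ≤ (Nη : ℝ) := by exact_mod_cast hp
      calc ((p : ℝ) + 1) * Δx ≤ (Nη : ℝ) * Δx := by
            apply mul_le_mul_of_nonneg_right hp1 hΔx_pos.le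
        _ = η := by rw [hΔx]; field_simp
  have hanti : AntitoneOn ω (Set.Icc 0 η) := fun s hs t ht hst => hω_mono s hs t ht hst
  have hωint : ∀ p : ℕ, p < Nη →
      IntervalIntegrable ω volume ((p : ℝ) * Δx) (((p : ℝ) + 1) * Δx) := by
    intro p hp
    apply AntitoneOn.intervalIntegrable
    have h1 : (p : ℝ) * Δx ≤ ((p : ℝ) + 1) * Δx := by nlinarith
    rw [Set.uIcc_of_le h1]
    exact hanti.mono (hsub p hp)
  have hζ_nonneg : ∀ p : ℕ, p < Nη → 0 ≤ ζ p := by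
    intro p hp
    rw [hζ]
    apply intervalIntegral.integral_nonneg (by nlinarith)
    intro y hy
    exact hω_nonneg y (hsub p hp hy)
  have hζ_step : ∀ p : ℕ, p + 1 < Nη → ζ (p + 1) ≤ ζ p := by
    intro p hp
    have key : ζ (p + 1) = ∫ y in ((p : ℝ) * Δx)..(((p : ℝ) + 1) * Δx), ω (y + Δx) := by
      rw [hζ, intervalIntegral.integral_comp_add_right]
      congr 1 <;> push_cast <;> ring
    rw [key, hζ]
    have h1 : (p : ℝ) * Δx ≤ ((p : ℝ) + 1) * Δx := by nlinarith
    apply intervalIntegral.integral_mono_on h1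
    · apply AntitoneOn.intervalIntegrable
      rw [Set.uIcc_of_le h1]
      intro s hs t ht hst
      have hmem : ∀ y : ℝ, y ∈ Set.Icc ((p : ℝ) * Δx) (((p : ℝ) + 1) * Δx) →
          y + Δx ∈ Set.Icc 0 η := by
        intro y hy
        have := hsub (p + 1) hp
        apply this
        constructor <;> [push_cast; push_cast] <;> [nlinarith [hy.1]; nlinarith [hy.2]]
      exact hanti (hmem s hs) (hmem t ht) (by linarith)
    · exact hωint p (Nat.lt_of_succ_lt hp)
    · intro y hy
      have hy1 : y ∈ Set.Icc (0 : ℝ) η := hsub p (Nat.lt_of_succ_lt hp) hy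
      have hy2 : y + Δx ∈ Set.Icc (0 : ℝ) η := by
        apply hsub (p + 1) hp
        constructor <;> push_cast <;> [nlinarith [hy.1]; nlinarith [hy.2]]
      exact hω_mono y hy1 (y + Δx) hy2 (by linarith)
  -- coefficients
  set g : ℕ → ℝ := fun p => (if 1 ≤ p then ζ (p - 1) else 0) - (if p < Nη then ζ p else 0)
    with hg
  -- identity
  have hid : ∀ i : ℤ, c (i - 1) - 2 * c i + c (i + 1) =
      ∑ p ∈ Finset.range (Nη + 1), g p * d (i + p) := by
    intro i
    have e0 : ∑ p ∈ Finset.range (Nη + 1), g p * d (i + p) =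
        (∑ p ∈ Finset.range (Nη + 1), (if 1 ≤ p then ζ (p - 1) else 0) * d (i + p)) -
        (∑ p ∈ Finset.range (Nη + 1), (if p < Nη then ζ p else 0) * d (i + p)) := by
      rw [← Finset.sum_sub_distrib]
      exact Finset.sum_congr rfl fun p _ => by rw [hg]; ring
    have e1 : ∑ p ∈ Finset.range (Nη + 1), (if 1 ≤ p then ζ (p - 1) else 0) * d (i + p) =
        ∑ p ∈ Finset.range Nη, ζ p * d (i + p + 1) := by
      rw [Finset.sum_range_succ']
      simp only [Nat.le_add_left, if_pos, Nat.add_sub_cancel, Nat.not_succ_le_zero, if_neg,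
        Nat.lt_irrefl, zero_mul, add_zero, Nat.cast_zero]
      norm_num
      exact Finset.sum_congr rfl fun p _ => by push_cast; ring_nf
    have e2 : ∑ p ∈ Finset.range (Nη + 1), (if p < Nη then ζ p else 0) * d (i + p) =
        ∑ p ∈ Finset.range Nη, ζ p * d (i + p) := by
      rw [Finset.sum_range_succ, if_neg (lt_irrefl Nη), zero_mul, add_zero]
      exact Finset.sum_congr rfl fun p hp => by rw [if_pos (Finset.mem_range.mp hp)]
    rw [e0, e1, e2]
    simp only [hc, hd, Finset.mul_sum]
    rw [← Finset.sum_sub_distrib, ← Finset.sum_add_distrib, ← Finset.sum_sub_distrib]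
    apply Finset.sum_congr rfl
    intro p _
    have h1 : i - 1 + (p : ℤ) + 1 = i + p := by ring
    have h2 : i + 1 + (p : ℤ) + 1 = i + p + 1 + 1 := by ring
    rw [h1, h2]
    ring
  -- sum of |g|
  have hgsum : ∑ p ∈ Finset.range (Nη + 1), |g p| = 2 * ζ 0 := by
    obtain ⟨M, rfl⟩ : ∃ M, Nη = M + 1 := ⟨Nη - 1, (Nat.succ_pred_eq_of_pos hNη).symm⟩
    rw [Finset.sum_range_succ', Finset.sum_range_succ]
    have hg0 : |g 0| = ζ 0 := by
      have hv : g 0 = -ζ 0 := by norm_num [hg]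
      rw [hv, abs_neg]
      exact abs_of_nonneg (hζ_nonneg 0 (Nat.zero_lt_succ M))
    have hgM : |g (M + 1)| = ζ M := by
      have hv : g (M + 1) = ζ M := by norm_num [hg]
      rw [hv]
      exact abs_of_nonneg (hζ_nonneg M (Nat.lt_succ_self M))
    have hgq : ∀ q ∈ Finset.range M, |g (q + 1)| = ζ q - ζ (q + 1) := by
      intro q hq
      have hqM : q + 1 < M + 1 := Nat.succ_lt_succ (Finset.mem_range.mp hq)
      have hv : g (q + 1) = ζ q - ζ (q + 1) := by
        norm_num [hg, hqM]
        intro h; exfalso; have := Finset.mem_range.mp hq; omega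
      rw [hv]
      exact abs_of_nonneg (sub_nonneg.mpr (hζ_step q hqM))
    rw [Finset.sum_congr rfl hgq, Finset.sum_range_sub' ζ M, hg0, hgM]
    ring
  -- shift invariance
  have hshift : ∀ p : ℕ, Summable (fun i : ℤ => |d (i + p)|) := by
    intro p
    exact ((shiftEquivZ (p : ℤ)).summable_iff).mpr hTV'
  have htshift : ∀ p : ℕ, ∑' i : ℤ, |d (i + p)| = T := by
    intro p
    exact (shiftEquivZ (p : ℤ)).tsum_eq fun j => |d j|
  -- majorant
  set F : ℤ → ℝ := fun i => ∑ p ∈ Finset.range (Nη + 1), |g p| * |d (i + p)| with hF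
  have hF_sum : Summable F := summable_sum fun p _ => (hshift p).mul_left |g p|
  have hpt : ∀ i : ℤ, |c (i - 1) - 2 * c i + c (i + 1)| ≤ F i := by
    intro i
    rw [hid i, hF]
    refine (Finset.abs_sum_le_sum_abs _ _).trans (le_of_eq ?_)
    exact Finset.sum_congr rfl fun p _ => abs_mul _ _
  have hL_sum : Summable (fun i : ℤ => |c (i - 1) - 2 * c i + c (i + 1)|) :=
    Summable.of_nonneg_of_le (fun i => abs_nonneg _) hpt hF_sum
  constructor
  · calc (∑' i : ℤ, |c (i - 1) - 2 * c i + c (i + 1)|) ≤ ∑' i : ℤ, F i :=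
          Summable.tsum_le_tsum hpt hL_sum hF_sum
      _ = ∑ p ∈ Finset.range (Nη + 1), ∑' i : ℤ, |g p| * |d (i + p)| :=
          Summable.tsum_finsetSum fun p _ => (hshift p).mul_left |g p|
      _ = ∑ p ∈ Finset.range (Nη + 1), |g p| * T := by
          refine Finset.sum_congr rfl fun p _ => ?_
          rw [tsum_mul_left, htshift p]
      _ = (∑ p ∈ Finset.range (Nη + 1), |g p|) * T := (Finset.sum_mul _ _ _).symm
      _ = 2 * ζ 0 * T := by rw [hgsum]
  · have hΔxη : Δx ≤ η := by
      rw [hΔx]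
      exact div_le_self hη.le hNηR
    have hζ0_le : ζ 0 ≤ ω 0 * Δx := by
      have h0 : ζ 0 = ∫ y in (0 : ℝ)..Δx, ω y := by rw [hζ]; norm_num
      rw [h0]
      have hmem : ∀ y ∈ Set.Icc (0 : ℝ) Δx, y ∈ Set.Icc (0 : ℝ) η := fun y hy =>
        ⟨hy.1, hy.2.trans hΔxη⟩
      calc (∫ y in (0 : ℝ)..Δx, ω y) ≤ ∫ _ in (0 : ℝ)..Δx, ω 0 := by
            apply intervalIntegral.integral_mono_on hΔx_pos.le
            · have := hωint 0 hNη
              simpa using this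
            · exact intervalIntegrable_const
            · intro y hy
              exact hω_mono 0 ⟨le_refl 0, hη.le⟩ y (hmem y hy) hy.1
        _ = ω 0 * Δx := by rw [intervalIntegral.integral_const]; simp [mul_comm]
    calc 2 * ζ 0 * T ≤ 2 * (ω 0 * Δx) * T := by
          apply mul_le_mul_of_nonneg_right _ hT_nonneg
          linarith
      _ = 2 * ω 0 * Δx * T := by ring
end

section
/- Let g, h : ℝ → ℝ with g differentiable, g nonincreasing (Dg ≤ 0), and let ν, μ ≥ 0 be constants. Define S(a, b) = (h(b)μ - g(a)ν)^+ · a - (h(b)μ - g(a)ν)^- · b for a, b ≥ 0, where x^+ = max(x,0) and x^- = -min(x,0). Then S is nondecreasing in a on [0, ∞): the partial derivative with respect to a (wherever M = h(b)μ - g(a)ν ≠ 0) equals -a Dg(a) ν ≥ 0 when M > 0, and the corresponding derivative when M < 0 is also nonnegative. -/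
/-- The lane-change source term
`S(a,b) = (h(b)μ - g(a)ν)⁺ a - (h(b)μ - g(a)ν)⁻ b` is nondecreasing in `a` on `[0,∞)`. -/
theorem source_monotone_first (g h : ℝ → ℝ) (hg : Differentiable ℝ g) (hga : Antitone g)
    (hh : Differentiable ℝ h) (hha : Antitone h)
    (ν μ : ℝ) (hν : 0 ≤ ν) (hμ : 0 ≤ μ) :
    ∀ b, 0 ≤ b → ∀ a₁ a₂, 0 ≤ a₁ → a₁ ≤ a₂ →
      max (h b * μ - g a₁ * ν) 0 * a₁ + min (h b * μ - g a₁ * ν) 0 * b ≤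
      max (h b * μ - g a₂ * ν) 0 * a₂ + min (h b * μ - g a₂ * ν) 0 * b := by
  intro b hb a₁ a₂ ha₁ ha
  have hg' : g a₂ ≤ g a₁ := hga ha
  have hM : h b * μ - g a₁ * ν ≤ h b * μ - g a₂ * ν := by nlinarith
  refine add_le_add ?_ (mul_le_mul_of_nonneg_right (min_le_min hM le_rfl) hb)
  exact mul_le_mul (max_le_max hM le_rfl) ha ha₁ (le_max_right _ _)
end

section
/- Let g, h : ℝ → ℝ be differentiable and nonincreasing, ν, μ ≥ 0 constants, and define S(a, b) = (h(b)μ - g(a)ν)^+ a + (h(b)μ - g(a)ν)^- b with x^- = min(x, 0). Then for a, b ∈ [0, 1], S is nonincreasing in b. -/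
/-- The lane-change source term
`S(a,b) = (h(b)μ - g(a)ν)⁺ a + (h(b)μ - g(a)ν)⁻ b` (with `x⁻ = min(x,0)`)
is nonincreasing in `b` for `a, b ∈ [0,1]`. -/
theorem source_antitone_second (g h : ℝ → ℝ) (hg : Differentiable ℝ g) (hga : Antitone g)
    (hh : Differentiable ℝ h) (hha : Antitone h)
    (ν μ : ℝ) (hν : 0 ≤ ν) (hμ : 0 ≤ μ) :
    ∀ a ∈ Set.Icc (0 : ℝ) 1, ∀ b₁ ∈ Set.Icc (0 : ℝ) 1, ∀ b₂ ∈ Set.Icc (0 : ℝ) 1,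
      b₁ ≤ b₂ →
      max (h b₂ * μ - g a * ν) 0 * a + min (h b₂ * μ - g a * ν) 0 * b₂ ≤
      max (h b₁ * μ - g a * ν) 0 * a + min (h b₁ * μ - g a * ν) 0 * b₁ := by
  rintro a ⟨ha0, ha1⟩ b₁ ⟨hb10, hb11⟩ b₂ ⟨hb20, hb21⟩ hb
  have hx : h b₂ * μ - g a * ν ≤ h b₁ * μ - g a * ν := by
    have := mul_le_mul_of_nonneg_right (hha hb) hμ
    linarith
  rcases le_total (h b₁ * μ - g a * ν) 0 with h1 | h1 <;>
    rcases le_total (h b₂ * μ - g a * ν) 0 with h2 | h2 <;>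
      simp [max_eq_left, max_eq_right, min_eq_left, min_eq_right, h1, h2] <;>
        nlinarith
end
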